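/- Let (Ω, Σ, μ) be a finite measure space, E_1, …, E_n Banach spaces, and for each i let m_i : Σ → E_i be a μ-continuous vector measure and φ_i : m_i(S) → ℝ a continuous function, with utility ν_i(f) = φ_i(∫ f dm_i) on S. Suppose the combined vector measure m = (μ, m_1, …, m_n) : Σ → ℝ × E_1 × ⋯ × E_n has the property that for every A ∈ Σ there exists a measurable B ⊆ A with m(B) = m(A)/2. Then every extreme point (g_1, …, g_n) of the set A(f_1,…,f_n) := {(g_1,…,g_n) ∈ A : ν_i(g_i) = ν_i(f_i) for all i}, for any allocation (f_1,…,f_n), has the property that each g_i is a.e. equal to a characteristic function. -/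

import Mathlib

open MeasureTheory

/-- The set `S = {f ∈ L^∞ : 0 ≤ f ≤ 1 a.e.}`. -/
def Sset {Ω : Type*} [MeasurableSpace Ω] (μ : Measure Ω) : Set (Lp ℝ ⊤ μ) :=
  {f | ∀ᵐ x ∂μ, 0 ≤ f x ∧ f x ≤ 1}

/-- The set of allocations: `n`-tuples in `S^n` summing to `1` a.e. -/
def Alloc {Ω : Type*} [MeasurableSpace Ω] (μ : Measure Ω) (n : ℕ) :
    Set (Fin n → Lp ℝ ⊤ μ) :=
  {f | (∀ i, f i ∈ Sset μ) ∧ ∀ᵐ x ∂μ, (∑ i, f i x) = 1}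

set_option maxHeartbeats 2000000 in
theorem stmt12 {Ω : Type*} [MeasurableSpace Ω] (μ : Measure Ω) [IsFiniteMeasure μ]
    {n : ℕ} (E : Fin n → Type*) [∀ i, NormedAddCommGroup (E i)]
    [∀ i, NormedSpace ℝ (E i)]
    (m : ∀ i, VectorMeasure Ω (E i))
    (habs : ∀ i, ∀ N : Set Ω, μ N = 0 → ∀ A : Set Ω, MeasurableSet A → m i (A ∩ N) = 0)
    -- `T i` is the integration operator `f ↦ ∫ f dm_i`
    (T : ∀ i, Lp ℝ ⊤ μ →ₗ[ℝ] E i)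
    (hT : ∀ i, ∀ (A : Set Ω) (hA : MeasurableSet A),
      T i (indicatorConstLp ⊤ hA (measure_ne_top μ A) (1 : ℝ)) = m i A)
    -- `φ i` is continuous on `m_i(S)`; the utility is `ν_i(f) = φ_i(∫ f dm_i)`
    (φ : ∀ i, E i → ℝ) (hφ : ∀ i, ContinuousOn (φ i) (T i '' Sset μ))
    -- halving property of the combined measure `m = (μ, m_1, …, m_n)`: every
    -- measurable `A` has a measurable subset `B` with `m(B) = m(A)/2`
    (hhalf : ∀ A : Set Ω, MeasurableSet A → ∃ B : Set Ω, B ⊆ A ∧ MeasurableSet B ∧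
      μ B + μ B = μ A ∧ ∀ i, m i B + m i B = m i A)
    -- `(f_1, …, f_n)` is an allocation and `(g_1, …, g_n)` an extreme point of the
    -- set of allocations indifferent to it
    (f : Fin n → Lp ℝ ⊤ μ) (hf : f ∈ Alloc μ n)
    (g : Fin n → Lp ℝ ⊤ μ)
    (hg : g ∈ Set.extremePoints ℝ
      {h : Fin n → Lp ℝ ⊤ μ | h ∈ Alloc μ n ∧ ∀ i, φ i (T i (h i)) = φ i (T i (f i))}) :
    -- each `g_i` is a.e. equal to a characteristic function
    ∀ i, ∃ B : Set Ω, MeasurableSet B ∧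
      (g i : Ω → ℝ) =ᵐ[μ] B.indicator (fun _ => (1 : ℝ)) := by
  intro i
  obtain ⟨⟨hgA, hgφ⟩, hext⟩ := hg
  -- measurable representatives
  set mk : ∀ k, Ω → ℝ := fun k => (Lp.aestronglyMeasurable (g k)).mk _ with hmk
  have hmkmeas : ∀ k, Measurable (mk k) := fun k =>
    ((Lp.aestronglyMeasurable (g k)).stronglyMeasurable_mk).measurable
  have hmkae : ∀ k, (g k : Ω → ℝ) =ᵐ[μ] mk k := fun k =>
    (Lp.aestronglyMeasurable (g k)).ae_eq_mk
  -- the master a.e. event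
  have Hae : ∀ᵐ x ∂μ, (∀ k, 0 ≤ (g k : Ω → ℝ) x ∧ (g k : Ω → ℝ) x ≤ 1) ∧
      (∑ k, (g k : Ω → ℝ) x) = 1 ∧ (∀ k, (g k : Ω → ℝ) x = mk k x) := by
    refine ((ae_all_iff.2 fun k => hgA.1 k).and (hgA.2.and (ae_all_iff.2 fun k => hmkae k)))
  set N : Set Ω := mk i ⁻¹' Set.Ioo 0 1 with hN
  by_cases hNz : μ N = 0
  · -- `g i` is a.e. `{0,1}`-valued
    refine ⟨mk i ⁻¹' {1}, (hmkmeas i) (measurableSet_singleton 1), ?_⟩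
    have hnotN : ∀ᵐ x ∂μ, x ∉ N := by
      rw [ae_iff]
      simpa using hNz
    filter_upwards [Hae, hnotN] with x hx hxN
    rcases hx with ⟨hb, -, hm'⟩
    have h01 : 0 ≤ mk i x ∧ mk i x ≤ 1 := by rw [← hm' i]; exact hb i
    have : mk i x = 0 ∨ mk i x = 1 := by
      by_contra hcon
      push_neg at hcon
      exact hxN ⟨lt_of_le_of_ne h01.1 (Ne.symm hcon.1), lt_of_le_of_ne h01.2 hcon.2⟩
    rcases this with h0 | h1
    · have : x ∉ mk i ⁻¹' ({1} : Set ℝ) := by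
        simp only [Set.mem_preimage, Set.mem_singleton_iff, h0]; norm_num
      rw [Set.indicator_of_notMem this, hm' i, h0]
    · have : x ∈ mk i ⁻¹' ({1} : Set ℝ) := by
        simp only [Set.mem_preimage, Set.mem_singleton_iff, h1]
      rw [Set.indicator_of_mem this, hm' i, h1]
  · -- contradiction branch
    exfalso
    -- find ε > 0 with positive measure of {ε ≤ mk i ≤ 1 - ε}
    obtain ⟨k₀, hk₀⟩ : ∃ k : ℕ, μ (mk i ⁻¹' Set.Icc (1/(k+2 : ℝ)) (1 - 1/(k+2 : ℝ))) ≠ 0 := by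
      by_contra hall
      push_neg at hall
      apply hNz
      have hsub : N ⊆ ⋃ k : ℕ, mk i ⁻¹' Set.Icc (1/(k+2 : ℝ)) (1 - 1/(k+2 : ℝ)) := by
        intro x hx
        rcases hx with ⟨hx0, hx1⟩
        have hmin : 0 < min (mk i x) (1 - mk i x) := lt_min hx0 (by linarith)
        obtain ⟨k, hk⟩ := exists_nat_one_div_lt hmin
        refine Set.mem_iUnion.2 ⟨k, ?_, ?_⟩
        · have h1 : 1/((k:ℝ)+2) ≤ 1/((k:ℝ)+1) := by
            apply one_div_le_one_div_of_le <;> [positivity; linarith]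
          calc 1/((k:ℝ)+2) ≤ 1/((k:ℝ)+1) := h1
            _ ≤ min (mk i x) (1 - mk i x) := hk.le
            _ ≤ mk i x := min_le_left _ _
        · have h1 : 1/((k:ℝ)+2) ≤ 1/((k:ℝ)+1) := by
            apply one_div_le_one_div_of_le <;> [positivity; linarith]
          have : 1/((k:ℝ)+2) ≤ 1 - mk i x :=
            h1.trans (hk.le.trans (min_le_right _ _))
          linarith
      refine measure_mono_null hsub ?_
      exact measure_iUnion_null fun k => hall k
    set ε : ℝ := 1/(k₀+2 : ℝ) with hε
    have hεpos : 0 < ε := by positivity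
    set A₀ : Set Ω := mk i ⁻¹' Set.Icc ε (1 - ε) with hA₀
    have hA₀meas : MeasurableSet A₀ := (hmkmeas i) measurableSet_Icc
    have hA₀pos : μ A₀ ≠ 0 := hk₀
    have hnpos : 0 < n := i.pos
    set δ : ℝ := ε / n with hδ
    have hδpos : 0 < δ := by positivity
    have hδε : δ ≤ ε := by
      rw [hδ]
      exact div_le_self hεpos.le (by exact_mod_cast hnpos)
    -- find j ≠ i with positive measure of A₀ ∩ {mk j ≥ δ}
    have hexists : ∀ᵐ x ∂μ, x ∈ A₀ → ∃ j, j ≠ i ∧ δ ≤ mk j x := by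
      filter_upwards [Hae] with x hx hxA
      rcases hx with ⟨hb, hsum, hm'⟩
      by_contra hcon
      push_neg at hcon
      have hxi : ε ≤ mk i x ∧ mk i x ≤ 1 - ε := hxA
      have hsum' : ∑ k ∈ Finset.univ.erase i, (g k : Ω → ℝ) x = 1 - (g i : Ω → ℝ) x := by
        have := Finset.add_sum_erase Finset.univ (fun k => (g k : Ω → ℝ) x)
          (Finset.mem_univ i)
        rw [hsum] at this
        linarith
      have hle : ∑ k ∈ Finset.univ.erase i, (g k : Ω → ℝ) x ≤ (n - 1) * δ := by
        have : ∀ k ∈ Finset.univ.erase i, (g k : Ω → ℝ) x ≤ δ := by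
          intro k hk
          rw [hm' k]
          exact (hcon k (Finset.ne_of_mem_erase hk)).le
        calc ∑ k ∈ Finset.univ.erase i, (g k : Ω → ℝ) x
            ≤ ∑ _k ∈ Finset.univ.erase i, δ := Finset.sum_le_sum this
          _ = (Finset.univ.erase i).card • δ := by rw [Finset.sum_const]
          _ = (n - 1) * δ := by
              rw [Finset.card_erase_of_mem (Finset.mem_univ i), Finset.card_univ,
                Fintype.card_fin, nsmul_eq_mul]
              push_cast [Nat.cast_sub hnpos]
              ring
      have hgi : (g i : Ω → ℝ) x ≤ 1 - ε := by rw [hm' i]; exact hxi.2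
      have hnd : (n : ℝ) * δ = ε := by
        rw [hδ]; field_simp
      have hn1 : (1:ℝ) ≤ n := by exact_mod_cast hnpos
      nlinarith [hδpos]
    obtain ⟨j, hji, hAj⟩ : ∃ j, j ≠ i ∧ μ (A₀ ∩ mk j ⁻¹' Set.Ici δ) ≠ 0 := by
      by_contra hall
      push_neg at hall
      apply hA₀pos
      set U : Set Ω := ⋃ (j : Fin n) (_ : j ≠ i), (A₀ ∩ mk j ⁻¹' Set.Ici δ) with hU
      have hUnull : μ U = 0 := by
        refine measure_iUnion_null fun j => measure_iUnion_null fun hj => hall j hj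
      have hsub : ∀ᵐ x ∂μ, x ∈ A₀ → x ∈ U := by
        filter_upwards [hexists] with x hx hxA
        obtain ⟨j, hj, hjx⟩ := hx hxA
        exact Set.mem_iUnion.2 ⟨j, Set.mem_iUnion.2 ⟨hj, hxA, hjx⟩⟩
      have hnull2 : μ {x | ¬(x ∈ A₀ → x ∈ U)} = 0 := by
        rw [← ae_iff]; exact hsub
      have : A₀ ⊆ U ∪ {x | ¬(x ∈ A₀ → x ∈ U)} := by
        intro x hx
        by_cases hxu : x ∈ U
        · exact Or.inl hxu
        · exact Or.inr fun h => hxu (h hx)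
      refine le_antisymm ?_ (zero_le)
      calc μ A₀ ≤ μ (U ∪ {x | ¬(x ∈ A₀ → x ∈ U)}) := measure_mono this
        _ ≤ μ U + μ {x | ¬(x ∈ A₀ → x ∈ U)} := measure_union_le _ _
        _ = 0 := by rw [hUnull, hnull2, add_zero]
    set A : Set Ω := A₀ ∩ mk j ⁻¹' Set.Ici δ with hA
    have hAmeas : MeasurableSet A := hA₀meas.inter ((hmkmeas j) measurableSet_Ici)
    obtain ⟨B, hBA, hBmeas, hμB, hmB⟩ := hhalf A hAmeas
    have hμBpos : μ B ≠ 0 := by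
      intro h0
      apply hAj
      rw [← hμB, h0, add_zero]
    set Bc : Set Ω := A \ B with hBc
    have hBcmeas : MeasurableSet Bc := hAmeas.diff hBmeas
    -- the perturbation
    set p : Lp ℝ ⊤ μ := δ • (indicatorConstLp ⊤ hBmeas (measure_ne_top μ B) (1 : ℝ)
      - indicatorConstLp ⊤ hBcmeas (measure_ne_top μ Bc) (1 : ℝ)) with hp
    set q : Ω → ℝ := fun x => δ * (B.indicator (fun _ => (1:ℝ)) x
      - Bc.indicator (fun _ => (1:ℝ)) x) with hq
    have hpq : (p : Ω → ℝ) =ᵐ[μ] q := by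
      filter_upwards [Lp.coeFn_smul (δ : ℝ)
          (indicatorConstLp (μ := μ) ⊤ hBmeas (measure_ne_top μ B) (1 : ℝ)
            - indicatorConstLp ⊤ hBcmeas (measure_ne_top μ Bc) (1 : ℝ)),
        Lp.coeFn_sub (indicatorConstLp (μ := μ) ⊤ hBmeas (measure_ne_top μ B) (1 : ℝ))
          (indicatorConstLp ⊤ hBcmeas (measure_ne_top μ Bc) (1 : ℝ)),
        indicatorConstLp_coeFn (μ := μ) (p := ⊤) (hs := hBmeas)
          (hμs := measure_ne_top μ B) (c := (1:ℝ)),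
        indicatorConstLp_coeFn (μ := μ) (p := ⊤) (hs := hBcmeas)
          (hμs := measure_ne_top μ Bc) (c := (1:ℝ))] with x h1 h2 h3 h4
      rw [hp]
      simp only [h1, Pi.smul_apply, h2, Pi.sub_apply, h3, h4, hq, smul_eq_mul]
    have hmBc : ∀ k, m k Bc = m k B := by
      intro k
      have h2 := VectorMeasure.of_add_of_diff (v := m k) hBmeas hAmeas hBA
      rw [← hmB k] at h2
      rw [hBc]
      exact add_left_cancel h2
    have hTp : ∀ k, T k p = 0 := by
      intro k
      rw [hp, _root_.map_smul, map_sub, hT k B hBmeas, hT k Bc hBcmeas, hmBc k, sub_self, smul_zero]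
    have hpne : p ≠ 0 := by
      intro h0
      apply hμBpos
      have hq0 : ∀ᵐ x ∂μ, q x = 0 := by
        filter_upwards [hpq, Lp.coeFn_zero (E := ℝ) (p := (⊤ : ENNReal)) (μ := μ)] with x h1 h2
        rw [← h1, h0, h2]; rfl
      have hsubB : B ⊆ {x | ¬ q x = 0} := by
        intro x hx
        have hxBc : x ∉ Bc := fun h => h.2 hx
        simp only [Set.mem_setOf_eq, hq, Set.indicator_of_mem hx,
          Set.indicator_of_notMem hxBc]
        intro hcon
        rw [sub_zero, mul_one] at hcon
        exact hδpos.ne' hcon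
      exact measure_mono_null hsubB (ae_iff.1 hq0)
    -- coefficients
    set c : Fin n → ℝ := fun k => (if k = i then (1:ℝ) else 0) - (if k = j then 1 else 0)
      with hc
    have hcsum : ∑ k, c k = 0 := by
      simp [hc, Finset.sum_sub_distrib]
    have hci : c i = 1 := by
      simp [hc, (Ne.symm hji : i ≠ j)]
    -- the two perturbed allocations
    set hP : Fin n → Lp ℝ ⊤ μ := fun k => g k + c k • p with hPdef
    set hM : Fin n → Lp ℝ ⊤ μ := fun k => g k - c k • p with hMdef
    have hcoeP : ∀ k, ∀ᵐ x ∂μ, (hP k : Ω → ℝ) x = (g k : Ω → ℝ) x + c k * q x := by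
      intro k
      filter_upwards [Lp.coeFn_add (g k) (c k • p), Lp.coeFn_smul (c k) p, hpq]
        with x h1 h2 h3
      rw [hPdef]
      simp only [h1, Pi.add_apply, h2, Pi.smul_apply, h3, smul_eq_mul]
    have hcoeM : ∀ k, ∀ᵐ x ∂μ, (hM k : Ω → ℝ) x = (g k : Ω → ℝ) x - c k * q x := by
      intro k
      filter_upwards [Lp.coeFn_sub (g k) (c k • p), Lp.coeFn_smul (c k) p, hpq]
        with x h1 h2 h3
      rw [hMdef]
      simp only [h1, Pi.sub_apply, h2, Pi.smul_apply, h3, smul_eq_mul]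
    -- pointwise bound lemma
    have key : ∀ (s : ℝ), s = 1 ∨ s = -1 → ∀ᵐ x ∂μ, ∀ k,
        0 ≤ (g k : Ω → ℝ) x + s * (c k * q x) ∧ (g k : Ω → ℝ) x + s * (c k * q x) ≤ 1 := by
      intro s hs
      filter_upwards [Hae] with x hx k
      rcases hx with ⟨hb, hsum, hm'⟩
      have hbk := hb k
      -- basic facts
      have hsq : s * s = 1 := by rcases hs with h | h <;> rw [h] <;> norm_num
      by_cases hxB : x ∈ B
      · -- q x = δ
        have hxBc : x ∉ Bc := fun h => h.2 hxB
        have hqx : q x = δ := by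
          simp [hq, Set.indicator_of_mem hxB, Set.indicator_of_notMem hxBc]
        have hxA : x ∈ A := hBA hxB
        have hxiA : ε ≤ mk i x ∧ mk i x ≤ 1 - ε := hxA.1
        have hxj : δ ≤ mk j x := hxA.2
        have hij : (g i : Ω → ℝ) x + (g j : Ω → ℝ) x ≤ 1 := by
          have hsub : ({i, j} : Finset (Fin n)) ⊆ Finset.univ := Finset.subset_univ _
          have h2 : ∑ k ∈ ({i, j} : Finset (Fin n)), (g k : Ω → ℝ) x ≤
              ∑ k, (g k : Ω → ℝ) x :=
            Finset.sum_le_sum_of_subset_of_nonneg hsub (fun k _ _ => (hb k).1)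
          rw [Finset.sum_pair (Ne.symm hji), hsum] at h2
          exact h2
        rcases eq_or_ne k i with rfl | hki
        · have hck : c k = 1 := hci
          rw [hck, hqx, hm' k]
          rcases hs with h | h <;> rw [h] <;> constructor <;> nlinarith [hxiA.1, hxiA.2]
        · rcases eq_or_ne k j with rfl | hkj
          · have hck : c k = -1 := by simp [hc, hki]
            rw [hck, hqx, hm' k]
            have hgj1 : mk k x ≤ 1 - ε := by
              rw [← hm' k]
              have := hij
              rw [hm' i] at this
              linarith [hxiA.1]
            rcases hs with h | h <;> rw [h] <;> constructor <;> nlinarith [hxj]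
          · have hck : c k = 0 := by simp [hc, hki, hkj]
            rw [hck]
            simpa using hbk
      · by_cases hxBc : x ∈ Bc
        · -- q x = -δ
          have hqx : q x = -δ := by
            simp [hq, Set.indicator_of_notMem hxB, Set.indicator_of_mem hxBc]
          have hxA : x ∈ A := hxBc.1
          have hxiA : ε ≤ mk i x ∧ mk i x ≤ 1 - ε := hxA.1
          have hxj : δ ≤ mk j x := hxA.2
          have hij : (g i : Ω → ℝ) x + (g j : Ω → ℝ) x ≤ 1 := by
            have hsub : ({i, j} : Finset (Fin n)) ⊆ Finset.univ := Finset.subset_univ _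
            have h2 : ∑ k ∈ ({i, j} : Finset (Fin n)), (g k : Ω → ℝ) x ≤
                ∑ k, (g k : Ω → ℝ) x :=
              Finset.sum_le_sum_of_subset_of_nonneg hsub (fun k _ _ => (hb k).1)
            rw [Finset.sum_pair (Ne.symm hji), hsum] at h2
            exact h2
          rcases eq_or_ne k i with rfl | hki
          · have hck : c k = 1 := hci
            rw [hck, hqx, hm' k]
            rcases hs with h | h <;> rw [h] <;> constructor <;> nlinarith [hxiA.1, hxiA.2]
          · rcases eq_or_ne k j with rfl | hkj
            · have hck : c k = -1 := by simp [hc, hki]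
              rw [hck, hqx, hm' k]
              have hgj1 : mk k x ≤ 1 - ε := by
                rw [← hm' k]
                have := hij
                rw [hm' i] at this
                linarith [hxiA.1]
              rcases hs with h | h <;> rw [h] <;> constructor <;> nlinarith [hxj]
            · have hck : c k = 0 := by simp [hc, hki, hkj]
              rw [hck]
              simpa using hbk
        · have hqx : q x = 0 := by
            simp [hq, Set.indicator_of_notMem hxB, Set.indicator_of_notMem hxBc]
          rw [hqx]
          simpa using hbk
    -- memberships
    have memP : hP ∈ {h : Fin n → Lp ℝ ⊤ μ | h ∈ Alloc μ n ∧
        ∀ k, φ k (T k (h k)) = φ k (T k (f k))} := by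
      refine ⟨⟨fun k => ?_, ?_⟩, fun k => ?_⟩
      · -- Sset
        filter_upwards [hcoeP k, key 1 (Or.inl rfl)] with x h1 h2
        rw [h1]
        have := h2 k
        rw [one_mul] at this
        exact this
      · -- sum
        filter_upwards [ae_all_iff.2 hcoeP, Hae] with x h1 h2
        rcases h2 with ⟨-, hsum, -⟩
        calc ∑ k, (hP k : Ω → ℝ) x = ∑ k, ((g k : Ω → ℝ) x + c k * q x) := by
              exact Finset.sum_congr rfl fun k _ => h1 k
          _ = (∑ k, (g k : Ω → ℝ) x) + (∑ k, c k) * q x := by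
              rw [Finset.sum_add_distrib, Finset.sum_mul]
          _ = 1 := by rw [hsum, hcsum, zero_mul, add_zero]
      · -- utility
        have : T k (hP k) = T k (g k) := by
          rw [hPdef]
          simp only [map_add, _root_.map_smul, hTp k, smul_zero, add_zero]
        rw [this]
        exact hgφ k
    have memM : hM ∈ {h : Fin n → Lp ℝ ⊤ μ | h ∈ Alloc μ n ∧
        ∀ k, φ k (T k (h k)) = φ k (T k (f k))} := by
      refine ⟨⟨fun k => ?_, ?_⟩, fun k => ?_⟩
      · filter_upwards [hcoeM k, key (-1) (Or.inr rfl)] with x h1 h2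
        rw [h1]
        have := h2 k
        rw [neg_one_mul, ← sub_eq_add_neg] at this
        exact this
      · filter_upwards [ae_all_iff.2 hcoeM, Hae] with x h1 h2
        rcases h2 with ⟨-, hsum, -⟩
        calc ∑ k, (hM k : Ω → ℝ) x = ∑ k, ((g k : Ω → ℝ) x - c k * q x) := by
              exact Finset.sum_congr rfl fun k _ => h1 k
          _ = (∑ k, (g k : Ω → ℝ) x) - (∑ k, c k) * q x := by
              rw [Finset.sum_sub_distrib, Finset.sum_mul]
          _ = 1 := by rw [hsum, hcsum, zero_mul, sub_zero]
      · have : T k (hM k) = T k (g k) := by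
          rw [hMdef]
          simp only [map_sub, _root_.map_smul, hTp k, smul_zero, sub_zero]
        rw [this]
        exact hgφ k
    -- g is in the open segment
    have hseg : g ∈ openSegment ℝ hP hM := by
      refine ⟨1/2, 1/2, by norm_num, by norm_num, by norm_num, ?_⟩
      funext k
      show (1/2 : ℝ) • hP k + (1/2 : ℝ) • hM k = g k
      simp only [hPdef, hMdef]
      module
    have hP_eq := hext memP memM hseg
    have h3 : g i + c i • p = g i := congrFun hP_eq i
    rw [hci, one_smul] at h3
    exact hpne (add_eq_left.mp h3)
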